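/- Let a, R > 0, λ ∈ R, ε > 0, and f(z) = (z-a)/(z+a). Then the integral of the bimeron energy density e(f) over the disk D_R of radius R centered at 0 equals 4π(1 - λa/(2ε)) · R²/(R²+a²) + π(a²/ε²)( ln((R²+a²)/a²) - R²/(R²+a²) ). -/

import Mathlib

open MeasureTheory Real

/-- The (smoothly extended) bimeron energy density of `f(z) = (z-a)/(z+a)`. -/
noncomputable def bimeronDensity (a lam ε : ℝ) (z : ℂ) : ℝ :=
  4 * a ^ 2 / (Complex.normSq z + a ^ 2) ^ 2
    - 2 * (lam * a / ε) *
        (z.re ^ 2 - z.im ^ 2 + 2 * a * z.re + a ^ 2) / (Complex.normSq z + a ^ 2) ^ 2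
    + (2 * a ^ 2 / ε ^ 2) * z.re ^ 2 / (Complex.normSq z + a ^ 2) ^ 2

lemma bimeron_radial1 (a R : ℝ) (ha : 0 < a) :
    ∫ r in (0:ℝ)..R, r / (r ^ 2 + a ^ 2) ^ 2 = R ^ 2 / (2 * a ^ 2 * (R ^ 2 + a ^ 2)) := by
  have hpos : ∀ r : ℝ, 0 < r ^ 2 + a ^ 2 := fun r => by positivity
  have h : ∀ r : ℝ, HasDerivAt (fun r : ℝ => -(2 * (r ^ 2 + a ^ 2))⁻¹)
      (r / (r ^ 2 + a ^ 2) ^ 2) r := by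
    intro r
    have h1 : HasDerivAt (fun r : ℝ => 2 * (r ^ 2 + a ^ 2)) (2 * (2 * r)) r := by
      have : HasDerivAt (fun r : ℝ => r ^ 2 + a ^ 2) (2 * r) r := by
        simpa using ((hasDerivAt_pow 2 r).add_const (a ^ 2))
      simpa using this.const_mul 2
    have h2 := (h1.inv (by positivity)).neg
    convert h2 using 1
    · rfl
    · rfl
    · rfl
    · field_simp [(hpos r).ne']
  rw [intervalIntegral.integral_eq_sub_of_hasDerivAt (fun r _ => h r) ?_]
  · field_simp
    ring
  · apply Continuous.intervalIntegrable
    exact continuous_id.div (by fun_prop) (fun r => by positivity)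

lemma bimeron_radial2 (a R : ℝ) (ha : 0 < a) :
    ∫ r in (0:ℝ)..R, r ^ 3 / (r ^ 2 + a ^ 2) ^ 2
      = (1 / 2) * (Real.log ((R ^ 2 + a ^ 2) / a ^ 2) - R ^ 2 / (R ^ 2 + a ^ 2)) := by
  have hpos : ∀ r : ℝ, 0 < r ^ 2 + a ^ 2 := fun r => by positivity
  have h : ∀ r : ℝ, HasDerivAt
      (fun r : ℝ => Real.log (r ^ 2 + a ^ 2) / 2 + a ^ 2 / (2 * (r ^ 2 + a ^ 2)))
      (r ^ 3 / (r ^ 2 + a ^ 2) ^ 2) r := by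
    intro r
    have hq : HasDerivAt (fun r : ℝ => r ^ 2 + a ^ 2) (2 * r) r := by
      simpa using ((hasDerivAt_pow 2 r).add_const (a ^ 2))
    have h1 : HasDerivAt (fun r : ℝ => Real.log (r ^ 2 + a ^ 2) / 2)
        ((2 * r) / (r ^ 2 + a ^ 2) / 2) r := (hq.log (hpos r).ne').div_const 2
    have h2 : HasDerivAt (fun r : ℝ => 2 * (r ^ 2 + a ^ 2)) (2 * (2 * r)) r := by
      simpa using hq.const_mul 2
    have h3 : HasDerivAt (fun y : ℝ => a ^ 2 * ((y ^ 2 + a ^ 2)⁻¹ * 2⁻¹))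
        (a ^ 2 * (-(2 * (2 * r)) / (2 * (r ^ 2 + a ^ 2)) ^ 2)) r := by
      simpa using ((h2.inv (by positivity)).const_mul (a ^ 2))
    convert h1.add h3 using 1
    · rfl
    · rfl
    · funext y; simp only [Pi.add_apply]; field_simp [(hpos y).ne']
    · field_simp [(hpos r).ne']; ring
  rw [intervalIntegral.integral_eq_sub_of_hasDerivAt (fun r _ => h r) ?_]
  · rw [Real.log_div (by positivity) (by positivity)]
    field_simp
    ring
  · apply Continuous.intervalIntegrable
    exact (by fun_prop : Continuous fun r : ℝ => r ^ 3).div (by fun_prop) (fun r => by positivity)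

lemma bimeron_polar (a lam ε r θ : ℝ) (ha : 0 < a) (hε : 0 < ε) :
    bimeronDensity a lam ε (Complex.polarCoord.symm (r, θ))
      = (4 * a ^ 2 - 2 * (lam * a / ε) * (a ^ 2 - r ^ 2)) / (r ^ 2 + a ^ 2) ^ 2
        + ((2 * a ^ 2 / ε ^ 2) * r ^ 2 - 4 * (lam * a / ε) * r ^ 2) / (r ^ 2 + a ^ 2) ^ 2
            * Real.cos θ ^ 2
        + (-(4 * (lam * a / ε) * a * r)) / (r ^ 2 + a ^ 2) ^ 2 * Real.cos θ := by
  rw [Complex.polarCoord_symm_apply]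
  simp only [bimeronDensity, Complex.normSq_apply, Complex.add_re, Complex.add_im,
    Complex.mul_re, Complex.mul_im, Complex.ofReal_re, Complex.ofReal_im, Complex.I_re,
    Complex.I_im, Complex.cos_ofReal_re, Complex.sin_ofReal_re, mul_zero, zero_mul, mul_one,
    one_mul, sub_zero, zero_sub, add_zero, zero_add, neg_zero]
  have hn : r * Real.cos θ * (r * Real.cos θ) + r * Real.sin θ * (r * Real.sin θ) + a ^ 2
      = r ^ 2 + a ^ 2 := by
    linear_combination r ^ 2 * (Real.sin_sq_add_cos_sq θ)
  rw [hn]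
  have hs : Real.sin θ ^ 2 = 1 - Real.cos θ ^ 2 := by
    rw [Real.sin_sq]
  have hd : (0:ℝ) < r ^ 2 + a ^ 2 := by positivity
  rw [mul_pow r (Real.sin θ) 2, hs]
  field_simp
  ring

lemma bimeron_continuous (a lam ε : ℝ) (ha : 0 < a) :
    Continuous (bimeronDensity a lam ε) := by
  have h : ∀ z : ℂ, (Complex.normSq z + a ^ 2) ^ 2 ≠ 0 := fun z => by
    have h0 := Complex.normSq_nonneg z; positivity
  have h1 : Continuous fun z : ℂ => (Complex.normSq z + a ^ 2) ^ 2 :=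
    (Complex.continuous_normSq.add continuous_const).pow 2
  unfold bimeronDensity
  exact ((continuous_const.div h1 h).sub
      ((by fun_prop : Continuous fun z : ℂ =>
        2 * (lam * a / ε) * (z.re ^ 2 - z.im ^ 2 + 2 * a * z.re + a ^ 2)).div h1 h)).add
    ((by fun_prop : Continuous fun z : ℂ => 2 * a ^ 2 / ε ^ 2 * z.re ^ 2).div h1 h)

/-- the bimeron energy on the disk `D_R` equals
`4π(1 - λa/(2ε)) R²/(R²+a²) + π (a²/ε²)(ln((R²+a²)/a²) - R²/(R²+a²))`. -/
theorem stmt_4 (a R lam ε : ℝ) (ha : 0 < a) (hR : 0 < R) (hε : 0 < ε) :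
    ∫ z in Metric.ball (0 : ℂ) R, bimeronDensity a lam ε z
      = 4 * π * (1 - lam * a / (2 * ε)) * (R ^ 2 / (R ^ 2 + a ^ 2))
        + π * (a ^ 2 / ε ^ 2) *
            (Real.log ((R ^ 2 + a ^ 2) / a ^ 2) - R ^ 2 / (R ^ 2 + a ^ 2)) := by
  set f := bimeronDensity a lam ε with hf
  have hfc : Continuous f := bimeron_continuous a lam ε ha
  have hsymm : Continuous fun p : ℝ × ℝ => Complex.polarCoord.symm p := by
    simp only [Complex.polarCoord_symm_apply]
    fun_prop
  have hgc : Continuous fun p : ℝ × ℝ => p.1 • f (Complex.polarCoord.symm p) :=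
    continuous_fst.smul (hfc.comp hsymm)
  set S : Set (ℝ × ℝ) := Set.Ioo 0 R ×ˢ Set.Ioo (-π) π with hS
  have hSmeas : MeasurableSet S := measurableSet_Ioo.prod measurableSet_Ioo
  have hSsub : S ⊆ polarCoord.target := by
    rw [polarCoord_target]
    exact Set.prod_mono (fun x hx => hx.1) subset_rfl
  -- step 1 : pass to polar coordinates
  have step1 : ∫ z in Metric.ball (0 : ℂ) R, f z
      = ∫ p in S, p.1 • f (Complex.polarCoord.symm p) := by
    rw [← integral_indicator measurableSet_ball,
      ← Complex.integral_comp_polarCoord_symm (Set.indicator (Metric.ball (0:ℂ) R) f)]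
    have hTmeas : MeasurableSet polarCoord.target := by
      rw [polarCoord_target]; exact measurableSet_Ioi.prod measurableSet_Ioo
    rw [setIntegral_congr_fun hTmeas (g := S.indicator fun p : ℝ × ℝ =>
        p.1 • f (Complex.polarCoord.symm p)) ?_]
    · rw [setIntegral_indicator hSmeas, Set.inter_eq_self_of_subset_right hSsub]
    · intro p hp
      rw [polarCoord_target] at hp
      obtain ⟨hp1, hp2⟩ := hp
      have habs : ‖Complex.polarCoord.symm p‖ = p.1 := by
        rw [Complex.norm_polarCoord_symm, abs_of_pos hp1]
      have hmem : Complex.polarCoord.symm p ∈ Metric.ball (0:ℂ) R ↔ p.1 < R := by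
        rw [Metric.mem_ball, dist_zero_right, habs]
      dsimp only
      by_cases hlt : p.1 < R
      · rw [Set.indicator_of_mem (hmem.mpr hlt), Set.indicator_of_mem]
        exact Set.mem_prod.mpr ⟨⟨hp1, hlt⟩, hp2⟩
      · rw [Set.indicator_of_notMem (fun hmem' => hlt (hmem.mp hmem')),
          Set.indicator_of_notMem, smul_zero]
        intro hmem'
        exact hlt hmem'.1.2
  -- step 2 : Fubini
  have hint : IntegrableOn (fun p : ℝ × ℝ => p.1 • f (Complex.polarCoord.symm p)) S := by
    have hK : IsCompact (Set.Icc (0:ℝ) R ×ˢ Set.Icc (-π) π) := isCompact_Icc.prod isCompact_Icc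
    exact (hgc.continuousOn.integrableOn_compact hK).mono_set
      (Set.prod_mono Set.Ioo_subset_Icc_self Set.Ioo_subset_Icc_self)
  have step2 : ∫ p in S, p.1 • f (Complex.polarCoord.symm p)
      = ∫ r in Set.Ioo (0:ℝ) R, ∫ θ in Set.Ioo (-π) π,
          r • f (Complex.polarCoord.symm (r, θ)) := by
    rw [hS] at hint ⊢
    rw [show (volume : Measure (ℝ × ℝ)) = (volume : Measure ℝ).prod volume from
      MeasureTheory.Measure.volume_eq_prod ℝ ℝ] at hint ⊢
    exact setIntegral_prod _ hint
  -- step 3 : inner (angular) integral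
  have hπ : -π ≤ π := by linarith [pi_pos]
  have step3 : ∀ r : ℝ, ∫ θ in Set.Ioo (-π) π, r • f (Complex.polarCoord.symm (r, θ))
      = (8 * π * a ^ 2 - 4 * π * lam * a ^ 3 / ε) * (r / (r ^ 2 + a ^ 2) ^ 2)
        + (2 * π * a ^ 2 / ε ^ 2) * (r ^ 3 / (r ^ 2 + a ^ 2) ^ 2) := by
    intro r
    rw [← integral_Ioc_eq_integral_Ioo, ← intervalIntegral.integral_of_le hπ]
    have hrw : (fun θ : ℝ => r • f (Complex.polarCoord.symm (r, θ)))
        = fun θ : ℝ =>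
          r * ((4 * a ^ 2 - 2 * (lam * a / ε) * (a ^ 2 - r ^ 2)) / (r ^ 2 + a ^ 2) ^ 2)
          + r * (((2 * a ^ 2 / ε ^ 2) * r ^ 2 - 4 * (lam * a / ε) * r ^ 2)
              / (r ^ 2 + a ^ 2) ^ 2) * Real.cos θ ^ 2
          + r * ((-(4 * (lam * a / ε) * a * r)) / (r ^ 2 + a ^ 2) ^ 2) * Real.cos θ := by
      funext θ
      rw [smul_eq_mul, hf, bimeron_polar a lam ε r θ ha hε]
      ring
    rw [hrw]
    have i1 : IntervalIntegrable (fun _ : ℝ =>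
        r * ((4 * a ^ 2 - 2 * (lam * a / ε) * (a ^ 2 - r ^ 2)) / (r ^ 2 + a ^ 2) ^ 2))
        volume (-π) π := intervalIntegrable_const
    have i2 : IntervalIntegrable (fun θ : ℝ =>
        r * (((2 * a ^ 2 / ε ^ 2) * r ^ 2 - 4 * (lam * a / ε) * r ^ 2)
          / (r ^ 2 + a ^ 2) ^ 2) * Real.cos θ ^ 2) volume (-π) π := by
      apply Continuous.intervalIntegrable; fun_prop
    have i3 : IntervalIntegrable (fun θ : ℝ =>
        r * ((-(4 * (lam * a / ε) * a * r)) / (r ^ 2 + a ^ 2) ^ 2) * Real.cos θ)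
        volume (-π) π := by
      apply Continuous.intervalIntegrable; fun_prop
    rw [intervalIntegral.integral_add (i1.add i2) i3, intervalIntegral.integral_add i1 i2,
      intervalIntegral.integral_const, intervalIntegral.integral_const_mul,
      intervalIntegral.integral_const_mul, integral_cos_sq, integral_cos]
    simp only [Real.sin_pi, Real.cos_pi, Real.sin_neg, Real.cos_neg, smul_eq_mul]
    have hd : (0:ℝ) < r ^ 2 + a ^ 2 := by positivity
    field_simp
    ring
  -- step 4 : radial integral
  rw [step1, step2, setIntegral_congr_fun measurableSet_Ioo (fun r _ => step3 r),
    ← integral_Ioc_eq_integral_Ioo, ← intervalIntegral.integral_of_le hR.le]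
  have j1 : IntervalIntegrable (fun r : ℝ =>
      (8 * π * a ^ 2 - 4 * π * lam * a ^ 3 / ε) * (r / (r ^ 2 + a ^ 2) ^ 2)) volume 0 R := by
    apply Continuous.intervalIntegrable
    exact continuous_const.mul (continuous_id.div (by fun_prop) (fun r => by positivity))
  have j2 : IntervalIntegrable (fun r : ℝ =>
      (2 * π * a ^ 2 / ε ^ 2) * (r ^ 3 / (r ^ 2 + a ^ 2) ^ 2)) volume 0 R := by
    apply Continuous.intervalIntegrable
    exact continuous_const.mul ((by fun_prop : Continuous fun r : ℝ => r ^ 3).div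
      (by fun_prop) (fun r => by positivity))
  rw [intervalIntegral.integral_add j1 j2, intervalIntegral.integral_const_mul,
    intervalIntegral.integral_const_mul, bimeron_radial1 a R ha, bimeron_radial2 a R ha]
  have hd : (0:ℝ) < R ^ 2 + a ^ 2 := by positivity
  field_simp
  ring
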